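/- Suppose χ ≥ 1. Then δ^𝒬 ≤ ( I(A;𝒬) − η·( χ·α₂ + (B − χ)·α₁ ) ) / |𝒬|. -/

import Mathlib

open Finset

theorem stmt_12
    {ι : Type*} [Fintype ι] [DecidableEq ι]
    (s : ι → ι → ℝ)
    (hs : ∀ i j, s i j ∈ Set.Icc (0:ℝ) 1)
    (hsymm : ∀ i j, s i j = s j i)
    (hself : ∀ i, s i i = 1)
    (T U Q : Finset ι)
    (hTU : Disjoint T U) (hTQ : Disjoint T Q) (hUQ : Disjoint U Q)
    (hQ : Q.Nonempty)
    (A : Finset ι) (hA : A.Nonempty) (hAsub : A ⊆ T ∪ U)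
    (η : ℝ) (hη : 0 < η)
    (α₁ β₁ α₂ β₂ : ℝ)
    (hα₁ : ∀ i ∈ U, α₁ ≤ Q.sup' hQ (fun j => s i j))
    (hβ₁ : ∀ i ∈ U, Q.sup' hQ (fun j => s i j) ≤ β₁)
    (hα₂ : ∀ i ∈ T, α₂ ≤ Q.sup' hQ (fun j => s i j))
    (hβ₂ : ∀ i ∈ T, Q.sup' hQ (fun j => s i j) ≤ β₂)
    (I : ℝ)
    (hI : I = ∑ i ∈ Q, A.sup' hA (fun j => s i j) + η * ∑ i ∈ A, Q.sup' hQ (fun j => s i j))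
    (δ : ℝ)
    (hδ : δ = ((Q.card : ℝ))⁻¹ * ∑ i ∈ Q, A.sup' hA (fun j => s i j))
    (hχ : 1 ≤ (A ∩ T).card) :
    δ ≤ (I - η * (((A ∩ T).card : ℝ) * α₂ + ((A.card : ℝ) - ((A ∩ T).card : ℝ)) * α₁)) /
      (Q.card : ℝ) := by

  have hsplit : A = (A ∩ T) ∪ (A \ T) := by
    ext x; simp [Finset.mem_inter, Finset.mem_sdiff, Finset.mem_union]; tauto
  have hdisj : Disjoint (A ∩ T) (A \ T) := by
    rw [Finset.disjoint_left]; intro x hx hx2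
    exact (Finset.mem_sdiff.mp hx2).2 (Finset.mem_inter.mp hx).2
  have hsum : (((A ∩ T).card : ℝ) * α₂ + ((A.card : ℝ) - ((A ∩ T).card : ℝ)) * α₁)
      ≤ ∑ i ∈ A, Q.sup' hQ (fun j => s i j) := by
    have hcard : (A \ T).card = A.card - (A ∩ T).card := by
      rw [Finset.card_sdiff_add_card_inter A T |>.symm]; omega
    have h1 : ((A ∩ T).card : ℝ) * α₂ ≤ ∑ i ∈ A ∩ T, Q.sup' hQ (fun j => s i j) := by
      calc ((A ∩ T).card : ℝ) * α₂ = ∑ _i ∈ A ∩ T, α₂ := by simp [mul_comm]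
        _ ≤ _ := Finset.sum_le_sum fun i hi => hα₂ i (Finset.mem_inter.mp hi).2
    have h2 : ((A.card : ℝ) - ((A ∩ T).card : ℝ)) * α₁ ≤ ∑ i ∈ A \ T, Q.sup' hQ (fun j => s i j) := by
      have : ((A.card : ℝ) - ((A ∩ T).card : ℝ)) = ((A \ T).card : ℝ) := by
        rw [hcard]; push_cast [Nat.cast_sub (Finset.card_le_card Finset.inter_subset_left)]; ring
      rw [this]
      calc ((A \ T).card : ℝ) * α₁ = ∑ _i ∈ A \ T, α₁ := by simp [mul_comm]
        _ ≤ _ := Finset.sum_le_sum fun i hi => by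
            have hiU : i ∈ U := by
              have := hAsub (Finset.mem_sdiff.mp hi).1
              rcases Finset.mem_union.mp this with h | h
              · exact absurd h (Finset.mem_sdiff.mp hi).2
              · exact h
            exact hα₁ i hiU
    calc _ ≤ ∑ i ∈ A ∩ T, Q.sup' hQ (fun j => s i j) + ∑ i ∈ A \ T, Q.sup' hQ (fun j => s i j) :=
          add_le_add h1 h2
      _ = ∑ i ∈ A, Q.sup' hQ (fun j => s i j) := by
          rw [← Finset.sum_union hdisj, ← hsplit]
  have hQpos : (0:ℝ) < Q.card := by exact_mod_cast Finset.card_pos.mpr hQ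
  rw [hδ, hI, div_eq_inv_mul]
  apply mul_le_mul_of_nonneg_left _ (inv_nonneg.mpr hQpos.le)
  nlinarith [mul_le_mul_of_nonneg_left hsum hη.le]
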